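/- Let μ : H₂' → H₂ be a homomorphism of groups, let H₁ ≤ H₂ and H₁' ≤ H₂' be subgroups such that μ(H₂') ∩ H₁ = μ(H₁') (equality of subsets of H₂) and ker μ ⊆ H₁'. Let k be a field and (π, V) a k-linear representation of H₁ (note that μ(H₁') ⊆ H₁, so π ∘ (μ restricted to H₁') is a representation of H₁' on V). Then the induced representation Ind_{H₁'}^{H₂'}(π ∘ μ|_{H₁'}) is a subrepresentation of the pullback μ*(Ind_{H₁}^{H₂} π); that is, there exists an injective k-linear map from the space of Ind_{H₁'}^{H₂'}(π ∘ μ|_{H₁'}) to the space of Ind_{H₁}^{H₂} π that intertwines the H₂'-action on the source with the H₂'-action on the target given by acting through μ. -/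
import Mathlib


open scoped Pointwise

section Ind

variable (k : Type*) [Field k] {V : Type*} [AddCommGroup V] [Module k V]
variable {B : Type*} [Group B]

/-- The space of the induced representation `Ind_A^B σ`: functions `f : B → V`
with `f (b * a) = σ a⁻¹ (f b)` for all `b ∈ B`, `a ∈ A`. -/
def indSpace (A : Subgroup B) (σ : Representation k A V) : Submodule k (B → V) where
  carrier := {f | ∀ (b : B) (a : A), f (b * a) = σ a⁻¹ (f b)}
  add_mem' := by
    intro f g hf hg b a
    simp only [Pi.add_apply, hf b a, hg b a, map_add]
  zero_mem' := by intro b a; simp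
  smul_mem' := by
    intro c f hf b a
    simp only [Pi.smul_apply, hf b a, map_smul]

theorem mem_indSpace {A : Subgroup B} {σ : Representation k A V} {f : B → V} :
    f ∈ indSpace k A σ ↔ ∀ (b : B) (a : A), f (b * a) = σ a⁻¹ (f b) := Iff.rfl

/-- The induced representation `Ind_A^B σ`, where `B` acts by `(b₀ • f) b = f (b₀⁻¹ * b)`. -/
def indRep (A : Subgroup B) (σ : Representation k A V) :
    Representation k B (indSpace k A σ) where
  toFun b₀ :=
    { toFun := fun f => ⟨fun b => (f : B → V) (b₀⁻¹ * b), fun b a => by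
        simpa [mul_assoc] using f.2 (b₀⁻¹ * b) a⟩
      map_add' := fun f g => rfl
      map_smul' := fun c f => rfl }
  map_one' := by
    apply LinearMap.ext; intro f; apply Subtype.ext; funext b; simp
  map_mul' x y := by
    apply LinearMap.ext; intro f; apply Subtype.ext; funext b
    simp [mul_assoc]

/-- Pullback of a representation of a subgroup `A` along a group homomorphism `μ`
mapping the subgroup `A'` into `A`. -/
def pullbackRep {G' G : Type*} [Group G'] [Group G] (μ : G' →* G)
    (A : Subgroup G) (A' : Subgroup G') (h : ∀ x : A', μ x ∈ A)
    (σ : Representation k A V) : Representation k A' V :=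
  MonoidHom.comp σ ((μ.comp A'.subtype).codRestrict A h)

end Ind

section Pf

variable {k : Type*} [Field k] {V : Type*} [AddCommGroup V] [Module k V]
  {H₂' H₂ : Type*} [Group H₂'] [Group H₂] (μ : H₂' →* H₂)
  (H₁ : Subgroup H₂) (π : Representation k H₁ V)

open Classical in
/-- Extension by zero: `Tfun f (μ b' * a) = π a⁻¹ (f b')`, and `0` off `μ(H₂') * H₁`. -/
noncomputable def Tfun (f : H₂' → V) (b : H₂) : V :=
  if h : ∃ p : H₂' × H₁, b = μ p.1 * p.2 then
    π h.choose.2⁻¹ (f h.choose.1)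
  else 0

variable {H₁' : Subgroup H₂'} {hmap : ∀ x : H₁', μ x ∈ H₁}

theorem Tfun_eq
    (hinter : Set.range μ ∩ (H₁ : Set H₂) = μ '' (H₁' : Set H₂'))
    (hker : μ.ker ≤ H₁')
    {f : H₂' → V}
    (hf : f ∈ indSpace k H₁' (pullbackRep k μ H₁ H₁' hmap π))
    {b : H₂} (b' : H₂') (a : H₁) (hb : b = μ b' * a) :
    Tfun μ H₁ π f b = π a⁻¹ (f b') := by
  have h : ∃ p : H₂' × H₁, b = μ p.1 * p.2 := ⟨(b', a), hb⟩
  rw [Tfun, dif_pos h]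
  have hspec : b = μ h.choose.1 * h.choose.2 := h.choose_spec
  set c := h.choose.1 with hc
  set d := h.choose.2 with hd
  -- μ (b'⁻¹ * c) = a * d⁻¹
  have heq : μ b' * (a : H₂) = μ c * (d : H₂) := hb.symm.trans hspec
  have h1 : μ (b'⁻¹ * c) = (a : H₂) * (d : H₂)⁻¹ := by
    have hc' : μ c = μ b' * (a : H₂) * (d : H₂)⁻¹ := eq_mul_inv_of_mul_eq heq.symm
    rw [map_mul, map_inv, hc']
    group
  have hmem : ((a : H₂) * (d : H₂)⁻¹) ∈ Set.range μ ∩ (H₁ : Set H₂) :=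
    ⟨⟨b'⁻¹ * c, h1⟩, mul_mem a.2 (inv_mem d.2)⟩
  rw [hinter] at hmem
  obtain ⟨e, heH, he⟩ := hmem
  have hdmem : b'⁻¹ * c ∈ H₁' := by
    have hk : (b'⁻¹ * c) * e⁻¹ ∈ μ.ker := by
      rw [MonoidHom.mem_ker, map_mul, map_inv, h1, he]
      group
    have h2 := mul_mem (hker hk) heH
    simpa [mul_assoc] using h2
  set d' : H₁' := ⟨b'⁻¹ * c, hdmem⟩ with hd'
  have hcd : c = b' * (d' : H₂') := by
    simp [hd', mul_assoc]
  have hfd := hf b' d'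
  have hrep : (pullbackRep k μ H₁ H₁' hmap π) d'⁻¹ = π (d * a⁻¹) := by
    have : ((μ.comp H₁'.subtype).codRestrict H₁ hmap) d'⁻¹ = d * a⁻¹ := by
      apply Subtype.ext
      show μ ((d' : H₂'))⁻¹ = (d : H₂) * (a : H₂)⁻¹
      rw [map_inv]
      simp only [hd']
      rw [h1]
      group
    rw [pullbackRep, MonoidHom.comp_apply, this]
  rw [hrep] at hfd
  rw [← hcd] at hfd
  rw [hfd, ← Module.End.mul_apply, ← map_mul]
  congr 1
  group

theorem Tfun_mem
    (hinter : Set.range μ ∩ (H₁ : Set H₂) = μ '' (H₁' : Set H₂'))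
    (hker : μ.ker ≤ H₁')
    {f : H₂' → V}
    (hf : f ∈ indSpace k H₁' (pullbackRep k μ H₁ H₁' hmap π)) :
    Tfun μ H₁ π f ∈ indSpace k H₁ π := by
  intro b a
  by_cases h : ∃ p : H₂' × H₁, b = μ p.1 * p.2
  · obtain ⟨⟨b', a₀⟩, hb⟩ := h
    have hba : b * a = μ b' * (a₀ * a) := by
      rw [hb]
      push_cast
      group
    rw [Tfun_eq μ H₁ π hinter hker hf b' (a₀ * a) hba,
      Tfun_eq μ H₁ π hinter hker hf b' a₀ hb,
      mul_inv_rev, map_mul, Module.End.mul_apply]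
  · have h2 : ¬ ∃ p : H₂' × H₁, b * a = μ p.1 * p.2 := by
      rintro ⟨p, hp⟩
      exact h ⟨(p.1, p.2 * a⁻¹), by
        push_cast
        rw [← mul_assoc, ← hp]
        group⟩
    rw [Tfun, dif_neg h2, Tfun, dif_neg h, map_zero]

end Pf

/-- Let `μ : H₂' → H₂` be a homomorphism of groups, `H₁ ≤ H₂`, `H₁' ≤ H₂'`
subgroups with `μ(H₂') ∩ H₁ = μ(H₁')` and `ker μ ⊆ H₁'`.  Let `(π, V)` be a `k`-linear
representation of `H₁` (so that, since `μ(H₁') ⊆ H₁`, the composite `π ∘ μ|_{H₁'}` is a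
representation of `H₁'` on `V`).  Then `Ind_{H₁'}^{H₂'} (π ∘ μ|_{H₁'})` is a subrepresentation
of the pullback `μ* (Ind_{H₁}^{H₂} π)`: there is an injective `k`-linear map intertwining the
`H₂'`-action on the source with the `H₂'`-action (through `μ`) on the target. -/
theorem induced_sub_pullback_induced
    {k : Type*} [Field k] {V : Type*} [AddCommGroup V] [Module k V]
    {H₂' H₂ : Type*} [Group H₂'] [Group H₂] (μ : H₂' →* H₂)
    (H₁ : Subgroup H₂) (H₁' : Subgroup H₂')
    (hmap : ∀ x : H₁', μ x ∈ H₁)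
    (hinter : Set.range μ ∩ (H₁ : Set H₂) = μ '' (H₁' : Set H₂'))
    (hker : μ.ker ≤ H₁')
    (π : Representation k H₁ V) :
    ∃ T : indSpace k H₁' (pullbackRep k μ H₁ H₁' hmap π) →ₗ[k] indSpace k H₁ π,
      Function.Injective T ∧
        ∀ (h : H₂') (f : indSpace k H₁' (pullbackRep k μ H₁ H₁' hmap π)),
          T (indRep k H₁' (pullbackRep k μ H₁ H₁' hmap π) h f)
            = indRep k H₁ π (μ h) (T f) := by
  classical
  refine ⟨{ toFun := fun f => ⟨Tfun μ H₁ π (f : H₂' → V),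
              Tfun_mem μ H₁ π hinter hker f.2⟩
            map_add' := ?_
            map_smul' := ?_ }, ?_, ?_⟩
  · intro f g
    apply Subtype.ext
    funext b
    show Tfun μ H₁ π ((f : H₂' → V) + g) b
      = Tfun μ H₁ π (f : H₂' → V) b + Tfun μ H₁ π (g : H₂' → V) b
    unfold Tfun
    split
    · simp
    · simp
  · intro c f
    apply Subtype.ext
    funext b
    show Tfun μ H₁ π (c • (f : H₂' → V)) b = c • Tfun μ H₁ π (f : H₂' → V) b
    unfold Tfun
    split
    · simp
    · simp
  · -- injectivity
    intro f g hfg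
    apply Subtype.ext
    funext b'
    have h1 : Tfun μ H₁ π (f : H₂' → V) (μ b') = (f : H₂' → V) b' := by
      rw [Tfun_eq μ H₁ π hinter hker f.2 b' 1 (by simp)]
      simp
    have h2 : Tfun μ H₁ π (g : H₂' → V) (μ b') = (g : H₂' → V) b' := by
      rw [Tfun_eq μ H₁ π hinter hker g.2 b' 1 (by simp)]
      simp
    have := congrArg (fun x : indSpace k H₁ π => (x : H₂ → V) (μ b')) hfg
    simpa [h1, h2] using this
  · -- equivariance
    intro h f
    apply Subtype.ext
    funext b
    show Tfun μ H₁ π (fun x => (f : H₂' → V) (h⁻¹ * x)) b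
      = Tfun μ H₁ π (f : H₂' → V) ((μ h)⁻¹ * b)
    by_cases hb : ∃ p : H₂' × H₁, b = μ p.1 * p.2
    · obtain ⟨⟨b', a⟩, hbe⟩ := hb
      have hmem' : (fun x => (f : H₂' → V) (h⁻¹ * x))
          ∈ indSpace k H₁' (pullbackRep k μ H₁ H₁' hmap π) :=
        (indRep k H₁' (pullbackRep k μ H₁ H₁' hmap π) h f).2
      rw [Tfun_eq μ H₁ π hinter hker hmem' b' a hbe]
      have hbe2 : (μ h)⁻¹ * b = μ (h⁻¹ * b') * a := by
        rw [hbe, map_mul, map_inv, mul_assoc]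
      rw [Tfun_eq μ H₁ π hinter hker f.2 (h⁻¹ * b') a hbe2]
    · have hb2 : ¬ ∃ p : H₂' × H₁, (μ h)⁻¹ * b = μ p.1 * p.2 := by
        rintro ⟨p, hp⟩
        exact hb ⟨(h * p.1, p.2), by rw [map_mul, mul_assoc, ← hp]; group⟩
      rw [Tfun, dif_neg hb, Tfun, dif_neg hb2]
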